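/- arXiv:2311.06294 — 2 statements merged into one kernel-verified Lean document; each statement's English description precedes it below -/
import Mathlib

section
/- The series of H(k)/k^3 over positive integers k converges to (5/4)ζ(4). -/
open scoped BigOperators

/-- The harmonic number `H k = ∑_{j=1}^k 1/j`. -/
noncomputable def H (k : ℕ) : ℝ := ∑ j ∈ Finset.Icc 1 k, (1 : ℝ) / j

/-- The generalized harmonic number `H^{(p)} k = ∑_{j=1}^k 1/j^p`. -/
noncomputable def Hgen (p k : ℕ) : ℝ := ∑ j ∈ Finset.Icc 1 k, (1 : ℝ) / (j : ℝ) ^ p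

open Finset Filter Real Topology

lemma H_eq_range (m : ℕ) : H m = ∑ j ∈ Finset.range m, (1 : ℝ) / (j + 1) := by
  rw [H, show Finset.Icc 1 m = Finset.Ico 1 (m + 1) by rfl, Finset.sum_Ico_eq_sum_range]
  simp [add_comm 1]

/-- general finite telescoping-style identity -/
lemma shift_sum (a : ℕ → ℝ) (M N : ℕ) (h : M ≤ N) :
    ∑ n ∈ range N, (a n - a (M + n)) =
      ∑ j ∈ range M, a j - ∑ j ∈ range M, a (N + j) := by
  rw [Finset.sum_sub_distrib]
  have h1 : ∑ n ∈ range N, a (M + n) = ∑ k ∈ Ico M (M + N), a k := by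
    rw [Finset.sum_Ico_eq_sum_range]; simp
  have h4 : ∑ j ∈ range M, a (N + j) = ∑ k ∈ Ico N (N + M), a k := by
    rw [Finset.sum_Ico_eq_sum_range]; simp
  have h2 : ∑ k ∈ range N, a k = ∑ k ∈ range M, a k + ∑ k ∈ Ico M N, a k := by
    rw [Finset.range_eq_Ico, ← Finset.sum_Ico_consecutive a (Nat.zero_le M) h,
      ← Finset.range_eq_Ico]
  have h3 : ∑ k ∈ Ico M (M + N), a k = ∑ k ∈ Ico M N, a k + ∑ k ∈ Ico N (N + M), a k := by
    rw [show N + M = M + N by omega, ← Finset.sum_Ico_consecutive a h (Nat.le_add_left N M)]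
  rw [h1, h2, h3, h4]; ring

lemma tendsto_aux (c : ℝ) : Tendsto (fun N : ℕ => 1 / ((N : ℝ) + c)) atTop (𝓝 0) := by
  simp only [one_div]
  exact Tendsto.inv_tendsto_atTop
    (tendsto_atTop_add_const_right _ c tendsto_natCast_atTop_atTop)

/-- telescoping sum: `∑_{n≥0} (1/(n+1) - 1/(m+n+2)) = H (m+1)` -/
lemma telesc (m : ℕ) :
    HasSum (fun n : ℕ => 1 / ((n : ℝ) + 1) - 1 / ((m : ℝ) + (n : ℝ) + 2)) (H (m + 1)) := by
  have hnn : ∀ n : ℕ, 0 ≤ 1 / ((n : ℝ) + 1) - 1 / ((m : ℝ) + (n : ℝ) + 2) := by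
    intro n
    have h1 : (0:ℝ) < (n : ℝ) + 1 := by positivity
    have h2 : ((n : ℝ) + 1) ≤ (m : ℝ) + (n : ℝ) + 2 := by
      have : (0:ℝ) ≤ (m : ℝ) := Nat.cast_nonneg m
      linarith
    have := one_div_le_one_div_of_le h1 h2
    linarith
  rw [hasSum_iff_tendsto_nat_of_nonneg hnn]
  set a : ℕ → ℝ := fun n => 1 / ((n : ℝ) + 1) with ha
  have heq : (fun N : ℕ => ∑ n ∈ range N, (1 / ((n : ℝ) + 1) - 1 / ((m : ℝ) + (n : ℝ) + 2)))
      =ᶠ[atTop] fun N => H (m + 1) - ∑ j ∈ range (m + 1), a (N + j) := by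
    filter_upwards [eventually_ge_atTop (m + 1)] with N hN
    have : ∀ n : ℕ, 1 / ((n : ℝ) + 1) - 1 / ((m : ℝ) + (n : ℝ) + 2) = a n - a ((m + 1) + n) := by
      intro n; simp only [ha]; push_cast; ring_nf
    simp only [this]
    rw [shift_sum a (m + 1) N hN, H_eq_range]
  refine Tendsto.congr' (Filter.EventuallyEq.symm heq) ?_
  have h0 : Tendsto (fun N : ℕ => ∑ j ∈ range (m + 1), a (N + j)) atTop (𝓝 0) := by
    have := tendsto_finset_sum (range (m + 1))
      (fun j _ => tendsto_aux ((j : ℝ) + 1))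
    simpa using this.congr (by intro N; apply Finset.sum_congr rfl; intro j _; simp [ha]; push_cast; ring_nf)
  simpa using (tendsto_const_nhds (x := H (m + 1))).sub h0

/-- the inner sum: `∑_n 1/((m+1)^2 (n+1) (m+n+2)) = H(m+1)/(m+1)^3` -/
lemma innerAux (m : ℕ) :
    HasSum (fun n : ℕ => 1 / (((m : ℝ) + 1) ^ 2 * ((n : ℝ) + 1) * ((m : ℝ) + (n : ℝ) + 2)))
      (H (m + 1) / ((m : ℝ) + 1) ^ 3) := by
  have h := (telesc m).mul_left (1 / ((m : ℝ) + 1) ^ 3)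
  have heq : ∀ n : ℕ, 1 / ((m : ℝ) + 1) ^ 3 * (1 / ((n : ℝ) + 1) - 1 / ((m : ℝ) + (n : ℝ) + 2))
      = 1 / (((m : ℝ) + 1) ^ 2 * ((n : ℝ) + 1) * ((m : ℝ) + (n : ℝ) + 2)) := by
    intro n
    have h1 : ((m : ℝ) + 1) ≠ 0 := by positivity
    have h2 : ((n : ℝ) + 1) ≠ 0 := by positivity
    have h3 : ((m : ℝ) + (n : ℝ) + 2) ≠ 0 := by positivity
    field_simp
    ring
  rw [show H (m + 1) / ((m : ℝ) + 1) ^ 3 = 1 / ((m : ℝ) + 1) ^ 3 * H (m + 1) by ring] at *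
  exact h.congr_fun (fun n => (heq n).symm)

lemma basel : HasSum (fun n : ℕ => 1 / ((n : ℝ) + 1) ^ 2) (π ^ 2 / 6) := by
  have h := hasSum_zeta_two
  have := (hasSum_nat_add_iff' (f := fun n : ℕ => (1 : ℝ) / (n : ℝ) ^ 2) 1).2 h
  simpa using this

lemma real_sum : HasSum (fun m : ℕ => H (m + 1) / ((m : ℝ) + 1) ^ 3) (π ^ 4 / 72) := by
  set F : ℕ × ℕ → ℝ := fun p =>
    1 / (((p.1 : ℝ) + 1) ^ 2 * ((p.2 : ℝ) + 1) * ((p.1 : ℝ) + (p.2 : ℝ) + 2)) with hFdef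
  set b : ℕ → ℝ := fun n => 1 / ((n : ℝ) + 1) ^ 2 with hb
  have hFnn : ∀ p : ℕ × ℕ, 0 ≤ F p := fun p => by positivity
  have hGsummable : Summable fun p : ℕ × ℕ => b p.1 * b p.2 :=
    Summable.mul_of_nonneg basel.summable basel.summable
      (fun n => by positivity) (fun n => by positivity)
  have hG : HasSum (fun p : ℕ × ℕ => b p.1 * b p.2) (π ^ 4 / 36) := by
    have := basel.mul basel hGsummable
    convert this using 1; rfl; ring
  -- pointwise symmetrization identity
  have hsym : ∀ p : ℕ × ℕ, F p + F p.swap = b p.1 * b p.2 := by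
    rintro ⟨m, n⟩
    simp only [hFdef, hb, Prod.swap]
    have h1 : ((m : ℝ) + 1) ≠ 0 := by positivity
    have h2 : ((n : ℝ) + 1) ≠ 0 := by positivity
    have h3 : ((m : ℝ) + (n : ℝ) + 2) ≠ 0 := by positivity
    have h4 : ((n : ℝ) + (m : ℝ) + 2) ≠ 0 := by positivity
    field_simp
    ring
  have hFsummable : Summable F := by
    refine Summable.of_nonneg_of_le hFnn (fun p => ?_) hGsummable
    have := hFnn p.swap
    have := hsym p
    linarith
  obtain ⟨t, hF⟩ := hFsummable
  have hFswap : HasSum (fun p : ℕ × ℕ => F p.swap) t := by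
    exact ((Equiv.prodComm ℕ ℕ).hasSum_iff).2 hF
  have hsum2 : HasSum (fun p : ℕ × ℕ => F p + F p.swap) (t + t) := hF.add hFswap
  have ht : t + t = π ^ 4 / 36 := by
    have := (hsum2.congr_fun (fun p => (hsym p).symm)).unique hG
    linarith
  have hfib : HasSum (fun m : ℕ => H (m + 1) / ((m : ℝ) + 1) ^ 3) t :=
    hF.prod_fiberwise (fun m => innerAux m)
  have : t = π ^ 4 / 72 := by linarith
  rwa [this] at hfib

theorem euler_sum_1 :
    HasSum (fun k : ℕ => (H (k+1) : ℂ) / ((k : ℂ) + 1) ^ 3) (5 * riemannZeta 4 / 4) := by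
  have h := Complex.hasSum_ofReal.mpr real_sum
  have heq : (fun k : ℕ => ((H (k + 1) / ((k : ℝ) + 1) ^ 3 : ℝ) : ℂ))
      = fun k : ℕ => (H (k+1) : ℂ) / ((k : ℂ) + 1) ^ 3 := by
    funext k; push_cast; ring
  have hval : ((π ^ 4 / 72 : ℝ) : ℂ) = 5 * riemannZeta 4 / 4 := by
    rw [riemannZeta_four]; push_cast; ring
  rw [heq, hval] at h
  exact h
end

section
/- The series of H(k)/(k(k+1)) over positive integers k converges to ζ(2). -/
open scoped BigOperators

open Filter Real Finset Topology

lemma H_succ (k : ℕ) : H (k + 1) = H k + 1 / (k + 1 : ℝ) := by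
  unfold H
  rw [Finset.sum_Icc_succ_top (by omega)]
  push_cast; ring

lemma H_eq (k : ℕ) : H k = ∑ i ∈ Finset.range k, (1 : ℝ) / (i + 1) := by
  induction k with
  | zero => simp [H]
  | succ n ih => rw [H_succ, Finset.sum_range_succ, ih]

lemma H_pos_rec (k : ℕ) : ((k : ℝ) + 1) ≠ 0 := by positivity

lemma partial_sum (n : ℕ) :
    ∑ k ∈ Finset.range n, H (k + 1) / ((k + 1 : ℝ) * (k + 2)) =
      1 - H (n + 1) / (n + 1) + ∑ k ∈ Finset.range n, 1 / ((k : ℝ) + 2) ^ 2 := by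
  induction n with
  | zero => simp [H]
  | succ n ih =>
      rw [Finset.sum_range_succ, Finset.sum_range_succ, ih]
      have h2 := H_succ (n + 1)
      push_cast at h2 ⊢
      rw [h2]
      have h1 : ((n : ℝ) + 1) ≠ 0 := by positivity
      have h2' : ((n : ℝ) + 2) ≠ 0 := by positivity
      field_simp
      ring

lemma H_div_tendsto : Tendsto (fun n : ℕ => H (n + 1) / (n + 1)) atTop (𝓝 0) := by
  have hu : Tendsto (fun i : ℕ => (1 : ℝ) / (i + 1)) atTop (𝓝 0) := by
    have := tendsto_one_div_add_atTop_nhds_zero_nat (𝕜 := ℝ)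
    simpa using this
  have hc := hu.cesaro
  have := hc.comp (tendsto_add_atTop_nat 1)
  refine this.congr fun n => ?_
  simp [H_eq, Function.comp, div_eq_inv_mul]

lemma basel_shift :
    Tendsto (fun n : ℕ => ∑ k ∈ Finset.range n, 1 / ((k : ℝ) + 2) ^ 2) atTop
      (𝓝 (π ^ 2 / 6 - 1)) := by
  have h := hasSum_zeta_two.tendsto_sum_nat
  have h2 := h.comp (tendsto_add_atTop_nat 2)
  have key : ∀ n : ℕ, (∑ i ∈ Finset.range (n + 2), (1 : ℝ) / (i : ℝ) ^ 2) =
      1 + ∑ k ∈ Finset.range n, 1 / ((k : ℝ) + 2) ^ 2 := by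
    intro n
    induction n with
    | zero => norm_num [Finset.sum_range_succ]
    | succ m ih =>
        rw [show m + 1 + 2 = (m + 2) + 1 by ring, Finset.sum_range_succ, ih,
          Finset.sum_range_succ]
        push_cast; ring
  have : Tendsto (fun n : ℕ => 1 + ∑ k ∈ Finset.range n, 1 / ((k : ℝ) + 2) ^ 2) atTop
      (𝓝 (π ^ 2 / 6)) := by
    refine h2.congr fun n => ?_
    simpa [Function.comp] using key n
  have := this.sub_const 1
  simpa using this

lemma real_version :
    HasSum (fun k : ℕ => H (k + 1) / ((k + 1 : ℝ) * (k + 2))) (π ^ 2 / 6) := by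
  have hnn : ∀ k : ℕ, 0 ≤ H (k + 1) / ((k + 1 : ℝ) * (k + 2)) := by
    intro k
    have hH : 0 ≤ H (k + 1) := Finset.sum_nonneg fun j _ => by positivity
    positivity
  rw [hasSum_iff_tendsto_nat_of_nonneg hnn]
  have h1 : Tendsto (fun n : ℕ => 1 - H (n + 1) / (n + 1) +
      ∑ k ∈ Finset.range n, 1 / ((k : ℝ) + 2) ^ 2) atTop (𝓝 (1 - 0 + (π ^ 2 / 6 - 1))) :=
    (tendsto_const_nhds.sub H_div_tendsto).add basel_shift
  have h2 : (1 : ℝ) - 0 + (π ^ 2 / 6 - 1) = π ^ 2 / 6 := by ring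
  rw [h2] at h1
  refine h1.congr fun n => ?_
  rw [partial_sum]

theorem euler_sum_6 :
    HasSum (fun k : ℕ => (H (k+1) : ℂ) / (((k : ℂ) + 1) * ((k : ℂ) + 2))) (riemannZeta 2) := by
  rw [riemannZeta_two]
  have h := Complex.hasSum_ofReal.mpr real_version
  have hs : ((π ^ 2 / 6 : ℝ) : ℂ) = (π : ℂ) ^ 2 / 6 := by push_cast; ring
  rw [hs] at h
  have heq : (fun k : ℕ => (H (k+1) : ℂ) / (((k : ℂ) + 1) * ((k : ℂ) + 2))) =
      fun k : ℕ => ((H (k + 1) / ((k + 1 : ℝ) * (k + 2)) : ℝ) : ℂ) := by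
    funext k; push_cast; ring
  rw [heq]
  exact h
end
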